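/- No deterministic allocation is fair when two similar doctors share the same preferences: let D be partitioned into clusters (proto-metric) and suppose i ≠ j are two doctors in the same cluster with identical strict preference orders, ≻_i = ≻_j. Then for every matching m : D → H, the point-mass allocation δ_m is not PIIF with respect to the proto-metric. -/
import Mathlib


open Finset

/-- A probabilistic allocation: a finitely supported probability distribution over
matchings (bijections between doctors `D` and hospitals `H`). -/
def IsAlloc {D H : Type*} [Fintype D] [Fintype H] [DecidableEq D] [DecidableEq H]
    (π : (D ≃ H) → ℝ) : Prop :=
  (∀ m, 0 ≤ π m) ∧ (∑ m : D ≃ H, π m) = 1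

/-- The prospect of doctor `i` under the allocation `π`: the probability that `i`
is matched to hospital `h`. -/
def prospect {D H : Type*} [Fintype D] [Fintype H] [DecidableEq D] [DecidableEq H]
    (π : (D ≃ H) → ℝ) (i : D) (h : H) : ℝ :=
  ∑ m : D ≃ H, if m i = h then π m else 0

/-- `p` is a probability distribution on `H`. -/
def IsDist {H : Type*} [Fintype H] (p : H → ℝ) : Prop :=
  (∀ h, 0 ≤ p h) ∧ (∑ h : H, p h) = 1

/-- Total variation distance between two distributions on `H`. -/
noncomputable def TV {H : Type*} [Fintype H] (p q : H → ℝ) : ℝ :=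
  (1 / 2) * ∑ h : H, |p h - q h|

/-- `p` stochastically dominates `q` with respect to the strict preference relation
`pref` (where `pref x y` means `x` is strictly preferred to `y`): for every `h`, the
probability of an outcome at least as good as `h` under `p` is at least that under `q`. -/
def SDom {H : Type*} [Fintype H] (pref : H → H → Prop) (p q : H → ℝ) : Prop :=
  ∀ h : H,
    (∑ h' : H, Set.indicator {x : H | pref x h ∨ x = h} q h') ≤
      ∑ h' : H, Set.indicator {x : H | pref x h ∨ x = h} p h'

/-- Preference-informed individual fairness with respect to a (pseudo)metric `d`,
total variation distance, and the doctors' strict preferences `pref`. -/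
def PIIF {D H : Type*} [Fintype D] [Fintype H] [DecidableEq D] [DecidableEq H]
    (d : D → D → ℝ) (pref : D → H → H → Prop) (π : (D ≃ H) → ℝ) : Prop :=
  ∀ i j : D, ∃ p : H → ℝ,
    IsDist p ∧ TV p (prospect π j) ≤ d i j ∧ SDom (pref i) (prospect π i) p

/-- PIIF with respect to the proto-metric induced by the cluster map `c`: the prospect
of every doctor stochastically dominates the prospect of every doctor in its cluster. -/
def ClusterPIIF {D H K : Type*} [Fintype D] [Fintype H] [DecidableEq D] [DecidableEq H]
    (c : D → K) (pref : D → H → H → Prop) (π : (D ≃ H) → ℝ) : Prop :=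
  ∀ i j : D, c i = c j → SDom (pref i) (prospect π i) (prospect π j)

/-- No deterministic allocation is fair when two similar doctors share
the same preferences: if `i ≠ j` are two doctors in the same cluster of the proto-metric
with identical strict preference orders, then for every matching `m` the point-mass
allocation `δ_m` is not PIIF with respect to the proto-metric. -/

-- Auxiliary: the prospect of a point mass is a point mass.
lemma prospect_delta {D H : Type*} [Fintype D] [Fintype H] [DecidableEq D] [DecidableEq H]
    (m : D ≃ H) (a : D) (h : H) :
    prospect (fun m' : D ≃ H => if m' = m then (1 : ℝ) else 0) a h
      = if m a = h then 1 else 0 := by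
  classical
  unfold prospect
  rw [Finset.sum_eq_single m]
  · simp
  · intro b _ hb; simp [hb]
  · simp

lemma sum_indicator_delta {D H : Type*} [Fintype D] [Fintype H] [DecidableEq D] [DecidableEq H]
    (m : D ≃ H) (a : D) (S : Set H) [DecidablePred (· ∈ S)] :
    (∑ h' : H, Set.indicator S
        (prospect (fun m' : D ≃ H => if m' = m then (1 : ℝ) else 0) a) h')
      = if m a ∈ S then 1 else 0 := by
  classical
  have : ∀ h' : H, Set.indicator S
      (prospect (fun m' : D ≃ H => if m' = m then (1 : ℝ) else 0) a) h'
      = if h' ∈ S ∧ m a = h' then 1 else 0 := by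
    intro h'
    by_cases hS : h' ∈ S
    · simp [Set.indicator_of_mem hS, prospect_delta, hS]
    · simp [Set.indicator_of_notMem hS, hS]
  rw [Finset.sum_congr rfl (fun h' _ => this h')]
  rw [Finset.sum_eq_single (m a)]
  · by_cases h : m a ∈ S <;> simp [h]
  · intro b _ hb
    exact if_neg (fun hh => hb hh.2.symm)
  · simp

theorem deterministic_allocation_unfair
    {D H K : Type*} [Fintype D] [Fintype H] [DecidableEq D] [DecidableEq H]
    (c : D → K)
    (dpref : D → H → H → Prop) (hdpref : ∀ a, IsStrictTotalOrder H (dpref a))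
    (i j : D) (hij : i ≠ j) (hcluster : c i = c j) (hsame : dpref i = dpref j)
    (m : D ≃ H) :
    ¬ ClusterPIIF c dpref (fun m' : D ≃ H => if m' = m then (1 : ℝ) else 0) := by
  classical
  intro hP
  have hmij : m i ≠ m j := fun h => hij (m.injective h)
  have key : ∀ a b : D, c a = c b →
      dpref a (m a) (m b) ∨ m a = m b := by
    intro a b hc
    have := hP a b hc (m b)
    rw [sum_indicator_delta, sum_indicator_delta] at this
    have hb : m b ∈ {x : H | dpref a x (m b) ∨ x = m b} := Or.inr rfl
    rw [if_pos hb] at this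
    by_cases ha : m a ∈ {x : H | dpref a x (m b) ∨ x = m b}
    · exact ha
    · rw [if_neg ha] at this; linarith
  have h1 := key i j hcluster
  have h2 := key j i hcluster.symm
  rw [← hsame] at h2
  rcases h1 with h1 | h1
  · rcases h2 with h2 | h2
    · exact (hdpref i).irrefl (m i) ((hdpref i).trans _ _ _ h1 h2)
    · exact hmij h2.symm
  · exact hmij h1
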